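/- Let C be Bernoulli with P(C=1) = p ∈ (0,1), and let S be any real-valued score with class-conditional distributions P_+ and P_- (with P_+ absolutely continuous). Define AUC(S) = P(S_+ > S_-) for independent S_+ ~ P_+, S_- ~ P_-. Then |AUC(S) - 1/2| ≤ sqrt( I(C;S) / (2·p·(1-p)) ). -/

import Mathlib

open MeasureTheory
open scoped ENNReal

-- Kullback–Leibler divergence: ∫ log(dP/dQ) dP.
noncomputable def kl {α : Type*} [MeasurableSpace α] (P Q : Measure α) : ℝ :=
  ∫ x, Real.log (P.rnDeriv Q x).toReal ∂P

open Real

noncomputable def gfun (t : ℝ) : ℝ := (t+1) * Real.log t - 2*(t-1)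
noncomputable def psifun (t : ℝ) : ℝ := 2*(t+2)*(t*Real.log t - t + 1) - 3*(t-1)^2

lemma gfun_hasDeriv {t : ℝ} (ht : 0 < t) :
    HasDerivAt gfun (Real.log t + 1/t - 1) t := by
  have h1 : HasDerivAt (fun t : ℝ => (t+1) * Real.log t)
      (1 * Real.log t + (t+1) * t⁻¹) t := by
    exact (((hasDerivAt_id t).add_const 1)).mul (Real.hasDerivAt_log ht.ne')
  have h2 : HasDerivAt (fun t : ℝ => 2*(t-1)) 2 t := by
    simpa using ((hasDerivAt_id t).sub_const 1).const_mul 2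
  have := h1.fun_sub h2
  refine this.congr_deriv ?_
  field_simp
  ring

lemma gfun_deriv_nonneg {t : ℝ} (ht : 0 < t) : 0 ≤ Real.log t + 1/t - 1 := by
  have := Real.one_sub_inv_le_log_of_pos ht
  have : 1 - 1/t ≤ Real.log t := by simpa [one_div] using this
  linarith

lemma gfun_mono : MonotoneOn gfun (Set.Ioi (0:ℝ)) := by
  apply monotoneOn_of_deriv_nonneg (convex_Ioi 0)
  · intro x hx
    exact (gfun_hasDeriv hx).continuousAt.continuousWithinAt
  · intro x hx
    rw [interior_Ioi] at hx
    exact (gfun_hasDeriv hx).differentiableAt.differentiableWithinAt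
  · intro x hx
    rw [interior_Ioi] at hx
    rw [(gfun_hasDeriv hx).deriv]
    exact gfun_deriv_nonneg hx

lemma gfun_one : gfun 1 = 0 := by simp [gfun]

lemma psifun_hasDeriv {t : ℝ} (ht : 0 < t) :
    HasDerivAt psifun (4 * gfun t) t := by
  have hlog := Real.hasDerivAt_log ht.ne'
  have h1 : HasDerivAt (fun t : ℝ => t * Real.log t) (Real.log t + 1) t := by
    have := (hasDerivAt_id t).fun_mul hlog
    refine this.congr_deriv ?_
    field_simp
    simp only [id_eq]; ring
  have h2 : HasDerivAt (fun t : ℝ => t*Real.log t - t + 1) (Real.log t) t := by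
    simpa using (h1.sub (hasDerivAt_id t)).add_const 1
  have h3 : HasDerivAt (fun t : ℝ => 2*(t+2)) 2 t := by
    simpa using ((hasDerivAt_id t).add_const 2).const_mul 2
  have h4 : HasDerivAt (fun t : ℝ => 2*(t+2)*(t*Real.log t - t + 1))
      (2*(t*Real.log t - t + 1) + 2*(t+2)*Real.log t) t := by
    exact h3.mul h2
  have h5 : HasDerivAt (fun t : ℝ => 3*(t-1)^2) (3*(2*(t-1))) t := by
    have : HasDerivAt (fun t : ℝ => (t-1)^2) (2*(t-1)) t := by
      simpa using ((hasDerivAt_id t).sub_const 1).fun_pow 2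
    simpa using this.const_mul 3
  have := h4.fun_sub h5
  refine this.congr_deriv ?_
  simp only [gfun]
  ring

lemma psifun_one : psifun 1 = 0 := by simp [psifun]

lemma psifun_nonneg {t : ℝ} (ht : 0 ≤ t) : 0 ≤ psifun t := by
  rcases eq_or_lt_of_le ht with h | ht
  · simp [psifun, ← h]; norm_num
  rcases le_total 1 t with h1 | h1
  · -- psifun monotone on [1, ∞)
    have hmono : MonotoneOn psifun (Set.Ici (1:ℝ)) := by
      apply monotoneOn_of_deriv_nonneg (convex_Ici 1)
      · intro x hx
        have hx0 : (0:ℝ) < x := lt_of_lt_of_le one_pos hx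
        exact (psifun_hasDeriv hx0).continuousAt.continuousWithinAt
      · intro x hx
        rw [interior_Ici] at hx
        have hx0 : (0:ℝ) < x := lt_trans one_pos hx
        exact (psifun_hasDeriv hx0).differentiableAt.differentiableWithinAt
      · intro x hx
        rw [interior_Ici] at hx
        have hx0 : (0:ℝ) < x := lt_trans one_pos hx
        rw [(psifun_hasDeriv hx0).deriv]
        have : gfun 1 ≤ gfun x := gfun_mono (Set.mem_Ioi.mpr one_pos)
          (Set.mem_Ioi.mpr hx0) hx.le
        rw [gfun_one] at this
        linarith
    have := hmono (Set.mem_Ici.mpr le_rfl) (Set.mem_Ici.mpr h1) h1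
    rwa [psifun_one] at this
  · -- psifun antitone on (0, 1]
    have hanti : AntitoneOn psifun (Set.Ioc (0:ℝ) 1) := by
      apply antitoneOn_of_deriv_nonpos (convex_Ioc 0 1)
      · intro x hx
        exact (psifun_hasDeriv hx.1).continuousAt.continuousWithinAt
      · intro x hx
        rw [interior_Ioc] at hx
        exact (psifun_hasDeriv hx.1).differentiableAt.differentiableWithinAt
      · intro x hx
        rw [interior_Ioc] at hx
        rw [(psifun_hasDeriv hx.1).deriv]
        have : gfun x ≤ gfun 1 := gfun_mono (Set.mem_Ioi.mpr hx.1)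
          (Set.mem_Ioi.mpr one_pos) hx.2.le
        rw [gfun_one] at this
        linarith
    have := hanti (Set.mem_Ioc.mpr ⟨ht, h1⟩) (Set.mem_Ioc.mpr ⟨one_pos, le_rfl⟩) h1
    rwa [psifun_one] at this

lemma key_ineq {t : ℝ} (ht : 0 ≤ t) :
    3*(t-1)^2 ≤ 2*(t+2)*(t*Real.log t - t + 1) := by
  have := psifun_nonneg ht
  simp only [psifun] at this
  linarith

lemma phi_nonneg {t : ℝ} (ht : 0 ≤ t) : 0 ≤ t*Real.log t - t + 1 := by
  have h := key_ineq ht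
  nlinarith [sq_nonneg (t-1)]

-- |t log t| ≤ 1 + C^2 for 0 ≤ t ≤ C
lemma abs_mul_log_le {t C : ℝ} (ht : 0 ≤ t) (htC : t ≤ C) :
    |t * Real.log t| ≤ 1 + C^2 := by
  rcases eq_or_lt_of_le ht with h | ht0
  · simp [← h]; nlinarith [sq_nonneg C]
  rcases le_total t 1 with h1 | h1
  · have hlog : Real.log t ≤ 0 := Real.log_nonpos ht h1
    have h2 : -Real.log t ≤ 1/t - 1 := by
      have := Real.log_le_sub_one_of_pos (show (0:ℝ) < 1/t by positivity)
      rwa [Real.log_div one_ne_zero ht0.ne', Real.log_one, zero_sub] at this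
    have habs : |t * Real.log t| = t * (-Real.log t) := by
      rw [abs_of_nonpos (mul_nonpos_of_nonneg_of_nonpos ht hlog)]; ring
    rw [habs]
    have : t * (-Real.log t) ≤ t * (1/t - 1) :=
      mul_le_mul_of_nonneg_left h2 ht
    have h3 : t * (1/t - 1) = 1 - t := by field_simp
    nlinarith [sq_nonneg C]
  · have hlog : 0 ≤ Real.log t := Real.log_nonneg h1
    have h2 : Real.log t ≤ t - 1 := Real.log_le_sub_one_of_pos ht0
    have habs : |t * Real.log t| = t * Real.log t := by
      rw [abs_of_nonneg (mul_nonneg ht hlog)]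
    rw [habs]
    have hC : 1 ≤ C := le_trans h1 htC
    nlinarith

lemma integrable_bdd {α : Type*} [MeasurableSpace α] {μ : Measure α} [IsFiniteMeasure μ]
    {g : α → ℝ} (hg : AEStronglyMeasurable g μ) {B : ℝ} (hB : ∀ᵐ x ∂μ, |g x| ≤ B) :
    Integrable g μ :=
  Integrable.mono' (integrable_const B) hg (by simpa [Real.norm_eq_abs] using hB)

lemma pinsker {α : Type*} [MeasurableSpace α] (P Q : Measure α)
    [IsProbabilityMeasure P] [IsProbabilityMeasure Q] (hPQ : P ≪ Q)
    {C : ℝ} (hC : 1 ≤ C) (hbd : ∀ᵐ x ∂Q, (P.rnDeriv Q x).toReal ≤ C)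
    {h : α → ℝ} (hm : Measurable h) (h0 : ∀ x, 0 ≤ h x) (h1 : ∀ x, h x ≤ 1) :
    2 * (∫ x, h x ∂P - ∫ x, h x ∂Q)^2 ≤ kl P Q := by
  set f : α → ℝ := fun x => (P.rnDeriv Q x).toReal with hfdef
  have hfm : Measurable f := (Measure.measurable_rnDeriv P Q).ennreal_toReal
  have hf0 : ∀ x, 0 ≤ f x := fun x => ENNReal.toReal_nonneg
  have hfQ1 : ∫ x, f x ∂Q = 1 := by
    rw [hfdef, Measure.integral_toReal_rnDeriv hPQ]; simp
  -- integrabilities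
  have hf_int : Integrable f Q := integrable_bdd hfm.aestronglyMeasurable
    (by filter_upwards [hbd] with x hx; rw [abs_of_nonneg (hf0 x)]; exact hx)
  have hflogf_meas : Measurable (fun x => f x * Real.log (f x)) :=
    hfm.mul (Real.measurable_log.comp hfm)
  have hflogf_int : Integrable (fun x => f x * Real.log (f x)) Q :=
    integrable_bdd hflogf_meas.aestronglyMeasurable
      (by filter_upwards [hbd] with x hx; exact abs_mul_log_le (hf0 x) hx)
  -- kl = ∫ f log f dQ
  have hkl : kl P Q = ∫ x, f x * Real.log (f x) ∂Q := by
    rw [kl, ← MeasureTheory.integral_rnDeriv_smul hPQ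
      (f := fun x => Real.log (P.rnDeriv Q x).toReal)]
    simp [smul_eq_mul, hfdef]
  set K := kl P Q with hK
  have hphi_int : Integrable (fun x => f x * Real.log (f x) - f x + 1) Q :=
    (hflogf_int.sub hf_int).add (integrable_const 1)
  have hsub_int : Integrable (fun x => f x * Real.log (f x) - f x) Q :=
    hflogf_int.sub hf_int
  have hphiQ : ∫ x, (f x * Real.log (f x) - f x + 1) ∂Q = K := by
    rw [integral_add hsub_int (integrable_const 1),
      integral_sub hflogf_int hf_int, hfQ1, hkl]
    simp
  have hK0 : 0 ≤ K := by
    rw [← hphiQ]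
    exact integral_nonneg fun x => phi_nonneg (hf0 x)
  -- Cauchy-Schwarz setup
  set d : α → ℝ := fun x => (2/3) * (f x + 2) with hddef
  have hd_pos : ∀ x, 0 < d x := fun x => by have := hf0 x; simp only [hddef]; linarith
  have hd1 : ∀ x, 1 ≤ d x := fun x => by have := hf0 x; simp only [hddef]; linarith
  have hdm : Measurable d := (measurable_const.mul (hfm.add measurable_const))
  set u : α → ℝ := fun x => |f x - 1| / Real.sqrt (d x) with hudef
  set v : α → ℝ := fun x => Real.sqrt (d x) with hvdef
  have hsqrt1 : ∀ x, 1 ≤ Real.sqrt (d x) := fun x => by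
    rw [show (1:ℝ) = Real.sqrt 1 by simp]
    exact Real.sqrt_le_sqrt (hd1 x)
  have hu0 : ∀ x, 0 ≤ u x := fun x => div_nonneg (abs_nonneg _) (Real.sqrt_nonneg _)
  have hv0 : ∀ x, 0 ≤ v x := fun x => Real.sqrt_nonneg _
  have huv : ∀ x, u x * v x = |f x - 1| := fun x =>
    div_mul_cancel₀ _ (by positivity)
  have hum : Measurable u := ((hfm.sub measurable_const).abs).div
    (Real.continuous_sqrt.measurable.comp hdm)
  have hvm : Measurable v := Real.continuous_sqrt.measurable.comp hdm
  have hu_le : ∀ x, u x ≤ |f x - 1| := fun x => by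
    rw [hudef]
    calc |f x - 1| / Real.sqrt (d x) ≤ |f x - 1| / 1 :=
          div_le_div_of_nonneg_left (abs_nonneg _) one_pos (hsqrt1 x)
      _ = |f x - 1| := div_one _
  -- Memℒp bounds
  have habsf1 : ∀ᵐ x ∂Q, |f x - 1| ≤ C + 1 := by
    filter_upwards [hbd] with x hx
    rw [abs_le]; constructor
    · linarith [hf0 x]
    · linarith
  have hu_bd : ∀ᵐ x ∂Q, ‖u x‖ ≤ C + 1 := by
    filter_upwards [habsf1] with x hx
    rw [Real.norm_of_nonneg (hu0 x)]
    exact (hu_le x).trans hx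
  have hv_bd : ∀ᵐ x ∂Q, ‖v x‖ ≤ Real.sqrt ((2/3)*(C+2)) := by
    filter_upwards [hbd] with x hx
    rw [Real.norm_of_nonneg (hv0 x)]
    exact Real.sqrt_le_sqrt (by simp only [hddef]; linarith)
  have hu2 : MemLp u (ENNReal.ofReal 2) Q :=
    MemLp.of_bound hum.aestronglyMeasurable _ hu_bd
  have hv2 : MemLp v (ENNReal.ofReal 2) Q :=
    MemLp.of_bound hvm.aestronglyMeasurable _ hv_bd
  have hpq : Real.HolderConjugate 2 2 := Real.HolderConjugate.two_two
  have hCS := integral_mul_le_Lp_mul_Lq_of_nonneg hpq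
      (Filter.Eventually.of_forall hu0) (Filter.Eventually.of_forall hv0) hu2 hv2
  have hrpow : ∀ a : ℝ, 0 ≤ a → a ^ (2:ℝ) = a ^ 2 := fun a ha => by
    rw [show (2:ℝ) = ((2:ℕ):ℝ) by norm_num, Real.rpow_natCast]
  have hu2eq : ∀ x, u x ^ (2:ℝ) = (f x - 1)^2 / d x := fun x => by
    rw [hrpow _ (hu0 x)]
    simp only [hudef]
    rw [div_pow, sq_abs, Real.sq_sqrt (hd_pos x).le]
  have hv2eq : ∀ x, v x ^ (2:ℝ) = d x := fun x => by
    rw [hrpow _ (hv0 x)]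
    simp only [hvdef]
    rw [Real.sq_sqrt (hd_pos x).le]
  have hptwise : ∀ x, (f x - 1)^2 / d x ≤ f x * Real.log (f x) - f x + 1 := fun x => by
    rw [div_le_iff₀ (hd_pos x)]
    have hk := key_ineq (hf0 x)
    simp only [hddef]
    nlinarith
  have hintu2 : Integrable (fun x => u x ^ (2:ℝ)) Q := by
    apply integrable_bdd
    · exact (hum.pow_const (2:ℕ)).aestronglyMeasurable.congr
        (Filter.Eventually.of_forall fun x => (hrpow _ (hu0 x)).symm)
    · filter_upwards [habsf1] with x hx
      rw [hrpow _ (hu0 x), abs_of_nonneg (pow_nonneg (hu0 x) 2)]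
      calc u x ^ 2 ≤ (C+1)^2 := by
            apply pow_le_pow_left₀ (hu0 x) ((hu_le x).trans hx)
        _ = (C+1)^2 := rfl
  have hint_u2 : ∫ x, u x ^ (2:ℝ) ∂Q ≤ K := by
    rw [← hphiQ]
    exact integral_mono hintu2 hphi_int
      (fun x => le_trans (le_of_eq (hu2eq x)) (hptwise x))
  have hint_v2 : ∫ x, v x ^ (2:ℝ) ∂Q = 2 := by
    have : (fun x => v x ^ (2:ℝ)) = fun x => (2/3) * (f x + 2) := by
      funext x; rw [hv2eq x, hddef]
    rw [this, integral_const_mul, integral_add hf_int (integrable_const 2), hfQ1]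
    simp
    norm_num
  have habs_le : ∫ x, |f x - 1| ∂Q ≤ Real.sqrt (2*K) := by
    have h1 : ∫ x, |f x - 1| ∂Q = ∫ x, u x * v x ∂Q :=
      integral_congr_ae (Filter.Eventually.of_forall fun x => (huv x).symm)
    rw [h1]
    refine hCS.trans ?_
    have hu2nn : 0 ≤ ∫ x, u x ^ (2:ℝ) ∂Q :=
      integral_nonneg fun x => Real.rpow_nonneg (hu0 x) _
    have hA : (∫ x, u x ^ (2:ℝ) ∂Q) ^ ((1:ℝ)/2) ≤ K ^ ((1:ℝ)/2) :=
      Real.rpow_le_rpow hu2nn hint_u2 (by norm_num)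
    rw [hint_v2]
    calc (∫ x, u x ^ (2:ℝ) ∂Q) ^ ((1:ℝ)/2) * (2:ℝ) ^ ((1:ℝ)/2)
        ≤ K ^ ((1:ℝ)/2) * (2:ℝ) ^ ((1:ℝ)/2) :=
          mul_le_mul_of_nonneg_right hA (Real.rpow_nonneg (by norm_num) _)
      _ = Real.sqrt K * Real.sqrt 2 := by
          rw [← Real.sqrt_eq_rpow, ← Real.sqrt_eq_rpow]
      _ = Real.sqrt (2*K) := by
          rw [← Real.sqrt_mul hK0, mul_comm]
  -- express the difference of integrals
  have hh_int_Q : Integrable h Q := integrable_bdd hm.aestronglyMeasurable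
    (B := 1) (Filter.Eventually.of_forall fun x => abs_le.mpr ⟨by linarith [h0 x], h1 x⟩)
  have hfh_int : Integrable (fun x => f x * h x) Q := by
    apply integrable_bdd (hfm.mul hm).aestronglyMeasurable (B := C)
    filter_upwards [hbd] with x hx
    simp only [Pi.mul_apply]
    rw [abs_mul, abs_of_nonneg (hf0 x), abs_of_nonneg (h0 x)]
    calc f x * h x ≤ f x * 1 := mul_le_mul_of_nonneg_left (h1 x) (hf0 x)
      _ ≤ C := by rw [mul_one]; exact hx
  have hPh : ∫ x, h x ∂P = ∫ x, f x * h x ∂Q := by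
    rw [← MeasureTheory.integral_rnDeriv_smul hPQ (f := h)]
    simp [smul_eq_mul, hfdef]
  have hf1_int : Integrable (fun x => f x - 1) Q := hf_int.sub (integrable_const 1)
  have hzero : ∫ x, (f x - 1) ∂Q = 0 := by
    rw [integral_sub hf_int (integrable_const 1), hfQ1]
    simp
  have hg_int : Integrable (fun x => (h x - 1/2) * (f x - 1)) Q := by
    apply integrable_bdd ((hm.sub measurable_const).mul
      (hfm.sub measurable_const)).aestronglyMeasurable (B := (1/2)*(C+1))
    filter_upwards [habsf1] with x hx
    simp only [Pi.mul_apply, Pi.sub_apply]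
    rw [abs_mul]
    apply mul_le_mul _ hx (abs_nonneg _) (by norm_num)
    rw [abs_le]; constructor
    · linarith [h0 x]
    · linarith [h1 x]
  have hE : ∫ x, h x ∂P - ∫ x, h x ∂Q = ∫ x, (h x - 1/2) * (f x - 1) ∂Q := by
    rw [hPh, ← integral_sub hfh_int hh_int_Q]
    have heq : (fun x => f x * h x - h x)
        = fun x => (h x - 1/2) * (f x - 1) + (1/2) * (f x - 1) := by
      funext x; ring
    rw [heq, integral_add hg_int (hf1_int.const_mul _), integral_const_mul, hzero]
    ring
  have hEbd : |∫ x, h x ∂P - ∫ x, h x ∂Q| ≤ (1/2) * Real.sqrt (2*K) := by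
    rw [hE]
    calc |∫ x, (h x - 1/2) * (f x - 1) ∂Q| ≤ ∫ x, |(h x - 1/2) * (f x - 1)| ∂Q := by
          rw [← Real.norm_eq_abs]
          refine le_trans (norm_integral_le_integral_norm _) (le_of_eq ?_)
          exact integral_congr_ae (Filter.Eventually.of_forall fun x => Real.norm_eq_abs _)
      _ ≤ ∫ x, (1/2) * |f x - 1| ∂Q := by
          apply integral_mono hg_int.abs (hf1_int.abs.const_mul _)
          intro x
          simp only
          rw [abs_mul]
          apply mul_le_mul_of_nonneg_right _ (abs_nonneg _)
          rw [abs_le]; constructor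
          · linarith [h0 x]
          · linarith [h1 x]
      _ = (1/2) * ∫ x, |f x - 1| ∂Q := integral_const_mul _ _
      _ ≤ (1/2) * Real.sqrt (2*K) := by
          apply mul_le_mul_of_nonneg_left habs_le (by norm_num)
  have hsq : Real.sqrt (2*K) ^ 2 = 2*K := Real.sq_sqrt (by linarith)
  have hsq2 := pow_le_pow_left₀ (abs_nonneg (∫ x, h x ∂P - ∫ x, h x ∂Q)) hEbd 2
  rw [sq_abs, mul_pow, hsq] at hsq2
  calc 2 * (∫ x, h x ∂P - ∫ x, h x ∂Q)^2 ≤ 2 * ((1/2)^2 * (2*K)) := by linarith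
    _ = K := by ring
    _ = kl P Q := hK

lemma smul_prod_meas {α β : Type*} [MeasurableSpace α] [MeasurableSpace β]
    (c : ℝ≥0∞) (μ : Measure α) (ν : Measure β) [SFinite μ] [SFinite ν] :
    (c • μ).prod ν = c • (μ.prod ν) := by
  ext s hs
  rw [Measure.prod_apply hs, Measure.smul_apply, smul_eq_mul, Measure.prod_apply hs,
    lintegral_smul_measure, smul_eq_mul]

lemma dirac_prod_withDensity {β : Type*} [MeasurableSpace β] {b : Bool}
    (ν : Measure β) [SFinite ν] {g : Bool × β → ℝ≥0∞} (hg : Measurable g) :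
    ((Measure.dirac b).prod ν).withDensity g
      = (Measure.dirac b).prod (ν.withDensity (fun s => g (b, s))) := by
  rw [Measure.dirac_prod, Measure.dirac_prod]
  ext s hs
  rw [withDensity_apply _ hs, setLIntegral_map hs hg measurable_prodMk_left,
    Measure.map_apply measurable_prodMk_left hs,
    withDensity_apply _ (measurable_prodMk_left hs)]

set_option maxHeartbeats 1000000 in
-- STATEMENT 6: with C Bernoulli(p), class-conditional laws P₊ (absolutely continuous)
-- and P₋, AUC(S) = P(S₊ > S₋) for independent S₊ ~ P₊, S₋ ~ P₋ (product measure), and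
-- I(C;S) the KL divergence between the joint law of (C,S) and the product of marginals:
-- |AUC(S) - 1/2| ≤ sqrt( I(C;S) / (2·p·(1-p)) ).
theorem stmt6 (Pp Pm : Measure ℝ) [IsProbabilityMeasure Pp] [IsProbabilityMeasure Pm]
    (hac : Pp ≪ MeasureTheory.volume)
    (p : ℝ) (hp : p ∈ Set.Ioo (0 : ℝ) 1) :
    |((Pp.prod Pm) {x : ℝ × ℝ | x.1 > x.2}).toReal - 1 / 2|
      ≤ Real.sqrt
          ((kl (ENNReal.ofReal p • ((Measure.dirac true).prod Pp)
                  + ENNReal.ofReal (1 - p) • ((Measure.dirac false).prod Pm))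
               ((ENNReal.ofReal p • Measure.dirac (true : Bool)
                  + ENNReal.ofReal (1 - p) • Measure.dirac (false : Bool)).prod
                 (ENNReal.ofReal p • Pp + ENNReal.ofReal (1 - p) • Pm)))
            / (2 * p * (1 - p))) := by
  obtain ⟨hp0, hp1⟩ := hp
  have hq0 : (0:ℝ) < 1 - p := by linarith
  set a : ℝ≥0∞ := ENNReal.ofReal p with hadef
  set b : ℝ≥0∞ := ENNReal.ofReal (1-p) with hbdef
  have ha0 : a ≠ 0 := ne_of_gt (ENNReal.ofReal_pos.mpr hp0)
  have hb0 : b ≠ 0 := ne_of_gt (ENNReal.ofReal_pos.mpr hq0)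
  have haT : a ≠ ⊤ := ENNReal.ofReal_ne_top
  have hbT : b ≠ ⊤ := ENNReal.ofReal_ne_top
  have hab : a + b = 1 := by
    rw [hadef, hbdef, ← ENNReal.ofReal_add hp0.le hq0.le,
      show p + (1-p) = 1 by ring, ENNReal.ofReal_one]
  have haR : a.toReal = p := ENNReal.toReal_ofReal hp0.le
  have hbR : b.toReal = 1 - p := ENNReal.toReal_ofReal hq0.le
  set M : Measure ℝ := a • Pp + b • Pm with hMdef
  set B : Measure Bool := a • Measure.dirac true + b • Measure.dirac false with hBdef
  set J : Measure (Bool × ℝ) := a • ((Measure.dirac true).prod Pp)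
      + b • ((Measure.dirac false).prod Pm) with hJdef
  haveI hMprob : IsProbabilityMeasure M := by
    constructor
    simp only [hMdef, Measure.coe_add, Pi.add_apply, Measure.smul_apply, smul_eq_mul,
      measure_univ, mul_one]
    exact hab
  haveI hBprob : IsProbabilityMeasure B := by
    constructor
    simp only [hBdef, Measure.coe_add, Pi.add_apply, Measure.smul_apply, smul_eq_mul,
      measure_univ, mul_one]
    exact hab
  haveI hJprob : IsProbabilityMeasure J := by
    constructor
    simp only [hJdef, Measure.coe_add, Pi.add_apply, Measure.smul_apply, smul_eq_mul,
      measure_univ, mul_one]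
    exact hab
  -- absolute continuity wrt mixture
  have hPpM : Pp ≪ M := by
    intro s hs
    simp only [hMdef, Measure.coe_add, Pi.add_apply, Measure.smul_apply, smul_eq_mul] at hs
    rcases add_eq_zero.mp hs with ⟨h1, _⟩
    rcases mul_eq_zero.mp h1 with h | h
    · exact absurd h ha0
    · exact h
  have hPmM : Pm ≪ M := by
    intro s hs
    simp only [hMdef, Measure.coe_add, Pi.add_apply, Measure.smul_apply, smul_eq_mul] at hs
    rcases add_eq_zero.mp hs with ⟨_, h2⟩
    rcases mul_eq_zero.mp h2 with h | h
    · exact absurd h hb0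
    · exact h
  -- density bounds
  have hbd_p : ∀ᵐ x ∂M, (Pp.rnDeriv M x).toReal ≤ 1/p := by
    have hle : a • Pp ≤ M := by rw [hMdef]; exact Measure.le_add_right le_rfl
    have h1 : (a • Pp).rnDeriv M ≤ᵐ[M] 1 := Measure.rnDeriv_le_one_of_le hle
    have h2 : (a • Pp).rnDeriv M =ᵐ[M] a • Pp.rnDeriv M :=
      Measure.rnDeriv_smul_left_of_ne_top Pp M haT
    filter_upwards [h1, h2] with x hx1 hx2
    rw [hx2] at hx1
    simp only [Pi.smul_apply, smul_eq_mul, Pi.one_apply] at hx1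
    have hinv : Pp.rnDeriv M x ≤ a⁻¹ :=
      ENNReal.le_inv_iff_mul_le.mpr (by rwa [mul_comm])
    calc (Pp.rnDeriv M x).toReal ≤ (a⁻¹).toReal :=
          ENNReal.toReal_mono (ENNReal.inv_ne_top.mpr ha0) hinv
      _ = 1/p := by rw [ENNReal.toReal_inv, hadef, ENNReal.toReal_ofReal hp0.le, one_div]
  have hbd_m : ∀ᵐ x ∂M, (Pm.rnDeriv M x).toReal ≤ 1/(1-p) := by
    have hle : b • Pm ≤ M := by rw [hMdef]; exact Measure.le_add_left le_rfl
    have h1 : (b • Pm).rnDeriv M ≤ᵐ[M] 1 := Measure.rnDeriv_le_one_of_le hle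
    have h2 : (b • Pm).rnDeriv M =ᵐ[M] b • Pm.rnDeriv M :=
      Measure.rnDeriv_smul_left_of_ne_top Pm M hbT
    filter_upwards [h1, h2] with x hx1 hx2
    rw [hx2] at hx1
    simp only [Pi.smul_apply, smul_eq_mul, Pi.one_apply] at hx1
    have hinv : Pm.rnDeriv M x ≤ b⁻¹ :=
      ENNReal.le_inv_iff_mul_le.mpr (by rwa [mul_comm])
    calc (Pm.rnDeriv M x).toReal ≤ (b⁻¹).toReal :=
          ENNReal.toReal_mono (ENNReal.inv_ne_top.mpr hb0) hinv
      _ = 1/(1-p) := by rw [ENNReal.toReal_inv, hbdef, ENNReal.toReal_ofReal hq0.le, one_div]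
  -- the joint density
  set g : Bool × ℝ → ℝ≥0∞ :=
    fun x => if x.1 = true then Pp.rnDeriv M x.2 else Pm.rnDeriv M x.2 with hgdef
  have hgm : Measurable g := by
    apply Measurable.ite (measurable_fst (measurableSet_singleton true))
    · exact (Measure.measurable_rnDeriv Pp M).comp measurable_snd
    · exact (Measure.measurable_rnDeriv Pm M).comp measurable_snd
  have hJeq : (B.prod M).withDensity g = J := by
    have h1 : B.prod M = a • ((Measure.dirac true).prod M)
        + b • ((Measure.dirac false).prod M) := by
      rw [hBdef, Measure.add_prod, smul_prod_meas, smul_prod_meas]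
    rw [h1, withDensity_add_measure, withDensity_smul_measure, withDensity_smul_measure,
      dirac_prod_withDensity M hgm, dirac_prod_withDensity M hgm]
    have hgt : (fun s => g (true, s)) = Pp.rnDeriv M := by
      funext s; simp [hgdef]
    have hgf : (fun s => g (false, s)) = Pm.rnDeriv M := by
      funext s; simp [hgdef]
    rw [hgt, hgf, Measure.withDensity_rnDeriv_eq Pp M hPpM,
      Measure.withDensity_rnDeriv_eq Pm M hPmM, hJdef]
  have hJac : J ≪ B.prod M := hJeq ▸ withDensity_absolutelyContinuous _ _
  have hrn : J.rnDeriv (B.prod M) =ᵐ[B.prod M] g := by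
    rw [← hJeq]; exact Measure.rnDeriv_withDensity _ hgm
  have hrnJ : J.rnDeriv (B.prod M) =ᵐ[J] g := hJac.ae_eq hrn
  -- kl decomposition
  have hFm : Measurable (fun x : Bool × ℝ => Real.log (g x).toReal) :=
    Real.measurable_log.comp hgm.ennreal_toReal
  have hint_p : Integrable (fun s => Real.log (Pp.rnDeriv M s).toReal) Pp := by
    rw [← MeasureTheory.integrable_rnDeriv_smul_iff hPpM]
    refine integrable_bdd ?_ (B := 1 + (1/p)^2) ?_
    · exact ((Measure.measurable_rnDeriv Pp M).ennreal_toReal.mul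
        (Real.measurable_log.comp
          (Measure.measurable_rnDeriv Pp M).ennreal_toReal)).aestronglyMeasurable
    · filter_upwards [hbd_p] with x hx
      simpa [smul_eq_mul] using abs_mul_log_le ENNReal.toReal_nonneg hx
  have hint_m : Integrable (fun s => Real.log (Pm.rnDeriv M s).toReal) Pm := by
    rw [← MeasureTheory.integrable_rnDeriv_smul_iff hPmM]
    refine integrable_bdd ?_ (B := 1 + (1/(1-p))^2) ?_
    · exact ((Measure.measurable_rnDeriv Pm M).ennreal_toReal.mul
        (Real.measurable_log.comp
          (Measure.measurable_rnDeriv Pm M).ennreal_toReal)).aestronglyMeasurable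
    · filter_upwards [hbd_m] with x hx
      simpa [smul_eq_mul] using abs_mul_log_le ENNReal.toReal_nonneg hx
  have hcomp_t : ((fun x : Bool × ℝ => Real.log (g x).toReal) ∘ (Prod.mk true))
      = fun s => Real.log (Pp.rnDeriv M s).toReal := by
    funext s; simp [hgdef, Function.comp]
  have hcomp_f : ((fun x : Bool × ℝ => Real.log (g x).toReal) ∘ (Prod.mk false))
      = fun s => Real.log (Pm.rnDeriv M s).toReal := by
    funext s; simp [hgdef, Function.comp]
  have hFint1 : Integrable (fun x : Bool × ℝ => Real.log (g x).toReal)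
      ((Measure.dirac true).prod Pp) := by
    rw [Measure.dirac_prod, integrable_map_measure hFm.aestronglyMeasurable
      measurable_prodMk_left.aemeasurable, hcomp_t]
    exact hint_p
  have hFint2 : Integrable (fun x : Bool × ℝ => Real.log (g x).toReal)
      ((Measure.dirac false).prod Pm) := by
    rw [Measure.dirac_prod, integrable_map_measure hFm.aestronglyMeasurable
      measurable_prodMk_left.aemeasurable, hcomp_f]
    exact hint_m
  have hklJ : kl J (B.prod M) = p * kl Pp M + (1-p) * kl Pm M := by
    have h1 : kl J (B.prod M) = ∫ x, Real.log (g x).toReal ∂J := by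
      apply integral_congr_ae
      filter_upwards [hrnJ] with x hx
      rw [hx]
    rw [h1, hJdef, integral_add_measure (hFint1.smul_measure haT) (hFint2.smul_measure hbT),
      integral_smul_measure, integral_smul_measure, haR, hbR]
    congr 1
    · congr 1
      rw [Measure.dirac_prod, integral_map measurable_prodMk_left.aemeasurable
        hFm.aestronglyMeasurable]
      rw [kl]
      apply integral_congr_ae
      apply Filter.Eventually.of_forall
      intro s
      simp [hgdef]
    · congr 1
      rw [Measure.dirac_prod, integral_map measurable_prodMk_left.aemeasurable
        hFm.aestronglyMeasurable]
      rw [kl]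
      apply integral_congr_ae
      apply Filter.Eventually.of_forall
      intro s
      simp [hgdef]
  -- AUC side
  have hS : MeasurableSet {x : ℝ × ℝ | x.1 > x.2} :=
    measurableSet_lt measurable_snd measurable_fst
  set hfun : ℝ → ℝ := fun y => (Pp (Set.Ioi y)).toReal with hfundef
  have hfm : Measurable hfun :=
    (measurable_measure_prodMk_right (μ := Pp) hS).ennreal_toReal
  have hfun0 : ∀ y, 0 ≤ hfun y := fun y => ENNReal.toReal_nonneg
  have hfun1 : ∀ y, hfun y ≤ 1 := fun y => by
    rw [hfundef]
    simp only
    rw [show (1:ℝ) = (1:ℝ≥0∞).toReal by simp]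
    exact ENNReal.toReal_mono ENNReal.one_ne_top prob_le_one
  have hfun_int : ∀ (ν : Measure ℝ) [IsProbabilityMeasure ν], Integrable hfun ν := by
    intro ν _
    exact integrable_bdd hfm.aestronglyMeasurable (B := 1)
      (Filter.Eventually.of_forall fun y => by
        rw [abs_of_nonneg (hfun0 y)]; exact hfun1 y)
  have hslice : ∀ (ν : Measure ℝ) [IsProbabilityMeasure ν],
      ∫ y, hfun y ∂ν = ((Pp.prod ν) {x : ℝ × ℝ | x.1 > x.2}).toReal := by
    intro ν _
    rw [Measure.prod_apply_symm hS, ← integral_toReal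
      (measurable_measure_prodMk_right (μ := Pp) hS).aemeasurable
      (Filter.Eventually.of_forall fun y => measure_lt_top Pp _)]
    rfl
  have hhalf : ∫ y, hfun y ∂Pp = 1/2 := by
    rw [hslice Pp]
    set S : Set (ℝ × ℝ) := {x : ℝ × ℝ | x.1 > x.2} with hSdef
    set S' : Set (ℝ × ℝ) := {x : ℝ × ℝ | x.1 < x.2} with hS'def
    set D : Set (ℝ × ℝ) := {x : ℝ × ℝ | x.1 = x.2} with hDdef
    have hS' : MeasurableSet S' := measurableSet_lt measurable_fst measurable_snd
    have hD : MeasurableSet D := measurableSet_eq_fun measurable_fst measurable_snd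
    have hswap : (Pp.prod Pp) S = (Pp.prod Pp) S' := by
      conv_lhs => rw [← Measure.prod_swap]
      rw [Measure.map_apply measurable_swap hS]
      congr 1
    have hdiag : (Pp.prod Pp) D = 0 := by
      rw [Measure.prod_apply_symm hD]
      have : ∀ y : ℝ, Pp ((fun x => (x, y)) ⁻¹' D) = 0 := fun y => by
        have hpre : ((fun x => (x, y)) ⁻¹' D) = {y} := by
          ext x; simp [hDdef]
        rw [hpre]
        exact hac Real.volume_singleton
      simp only [this, lintegral_zero]
    have hcompl : Sᶜ = S' ∪ D := by
      ext x
      simp only [hSdef, hS'def, hDdef, Set.mem_compl_iff, Set.mem_setOf_eq,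
        Set.mem_union, not_lt]
      constructor
      · intro h; rcases lt_or_eq_of_le h with h | h
        · exact Or.inl h
        · exact Or.inr h
      · intro h; rcases h with h | h
        · exact h.le
        · exact h.le
    have hdisj : Disjoint S' D := by
      rw [Set.disjoint_left]
      intro x hx1 hx2
      simp only [hS'def, Set.mem_setOf_eq] at hx1
      simp only [hDdef, Set.mem_setOf_eq] at hx2
      exact absurd hx2 (ne_of_lt hx1)
    have hsum : (Pp.prod Pp) S + (Pp.prod Pp) S = 1 := by
      have h1 : (Pp.prod Pp) S + (Pp.prod Pp) Sᶜ = 1 := by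
        rw [measure_add_measure_compl hS, measure_univ]
      rw [hcompl, measure_union hdisj hD, hdiag, add_zero, ← hswap] at h1
      exact h1
    have hfin : (Pp.prod Pp) S ≠ ⊤ := measure_ne_top _ _
    have := congrArg ENNReal.toReal hsum
    rw [ENNReal.toReal_add hfin hfin] at this
    simp only [ENNReal.toReal_one] at this
    linarith
  -- mixture integral
  have hmix : ∫ y, hfun y ∂M = p * ∫ y, hfun y ∂Pp + (1-p) * ∫ y, hfun y ∂Pm := by
    rw [hMdef, integral_add_measure ((hfun_int Pp).smul_measure haT)
      ((hfun_int Pm).smul_measure hbT), integral_smul_measure, integral_smul_measure,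
      haR, hbR, smul_eq_mul, smul_eq_mul]
  -- Pinsker applications
  have hC1 : (1:ℝ) ≤ 1/p := by rw [le_div_iff₀ hp0]; linarith
  have hC2 : (1:ℝ) ≤ 1/(1-p) := by rw [le_div_iff₀ hq0]; linarith
  have hpin1 := pinsker Pp M hPpM hC1 hbd_p hfm hfun0 hfun1
  have hpin2 := pinsker Pm M hPmM hC2 hbd_m hfm hfun0 hfun1
  -- assemble
  set A : ℝ := ∫ y, hfun y ∂Pm with hAdef
  have hgoalA : ((Pp.prod Pm) {x : ℝ × ℝ | x.1 > x.2}).toReal = A := by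
    rw [hAdef, hslice Pm]
  rw [hgoalA, hklJ]
  have hIp0 : 0 ≤ kl Pp M := le_trans (by positivity) hpin1
  have hIm0 : 0 ≤ kl Pm M := le_trans (by positivity) hpin2
  have hd1 : ∫ y, hfun y ∂Pp - ∫ y, hfun y ∂M = (1-p) * (1/2 - A) := by
    rw [hmix, hhalf]; ring
  have hd2 : A - ∫ y, hfun y ∂M = p * (A - 1/2) := by
    rw [hmix, hhalf]; ring
  rw [hd1] at hpin1
  rw [hmix, hhalf] at hpin2
  have hpin2' : 2 * (p * (A - 1/2))^2 ≤ kl Pm M := by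
    calc 2 * (p * (A - 1/2))^2 = 2 * (A - (p * (1/2) + (1-p) * A))^2 := by ring
      _ ≤ kl Pm M := hpin2
  have hkey : 2 * p * (1-p) * (A - 1/2)^2 ≤ p * kl Pp M + (1-p) * kl Pm M := by
    have e1 : p * (2 * ((1-p) * (1/2 - A))^2) ≤ p * kl Pp M :=
      mul_le_mul_of_nonneg_left hpin1 hp0.le
    have e2 : (1-p) * (2 * (p * (A - 1/2))^2) ≤ (1-p) * kl Pm M :=
      mul_le_mul_of_nonneg_left hpin2' hq0.le
    nlinarith [sq_nonneg (A - 1/2), sq_nonneg (1/2 - A), mul_pos hp0 hq0]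
  have hquot : (A - 1/2)^2 ≤ (p * kl Pp M + (1-p) * kl Pm M) / (2 * p * (1-p)) := by
    rw [le_div_iff₀ (by positivity)]
    nlinarith
  calc |A - 1/2| = Real.sqrt ((A - 1/2)^2) := (Real.sqrt_sq_eq_abs _).symm
    _ ≤ Real.sqrt ((p * kl Pp M + (1-p) * kl Pm M) / (2 * p * (1-p))) :=
        Real.sqrt_le_sqrt hquot
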